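/- Every nonempty hyperconvex metric space is contractible. -/

import Mathlib

universe u

open scoped ENNReal

/-- ℓ¹-distance formula on `WithLp 1 (α × β)`. -/
lemma l1_dist_eq {α β : Type*} [MetricSpace α] [MetricSpace β]
    (f g : WithLp 1 (α × β)) : dist f g = dist f.fst g.fst + dist f.snd g.snd := by
  rw [WithLp.prod_dist_eq_add (by norm_num : (0:ℝ) < (1:ℝ≥0∞).toReal)]
  simp [ENNReal.toReal_one]

/-- Hyperconvex spaces are injective: any map which is 1-Lipschitz on a subset `A`
of a metric space `X` (of the same universe) extends to a 1-Lipschitz map on `X`. -/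
lemma hyperconvex_extend {X : Type u} [MetricSpace X] {E : Type u} [MetricSpace E]
    (hyp : ∀ (I : Type u) (x : I → E) (r : I → ℝ), (∀ i, 0 ≤ r i) →
      (∀ i j, dist (x i) (x j) ≤ r i + r j) →
      ∃ c : E, ∀ i, dist (x i) c ≤ r i)
    (A : Set X) (f : X → E)
    (hf : ∀ a ∈ A, ∀ b ∈ A, dist (f a) (f b) ≤ dist a b) :
    ∃ F : X → E, (∀ x y, dist (F x) (F y) ≤ dist x y) ∧ ∀ a ∈ A, F a = f a := by
  classical
  set S : Set (Set (X × E)) :=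
    {G | (∀ a ∈ A, (a, f a) ∈ G) ∧
      ∀ q ∈ G, ∀ q' ∈ G, dist q.2 q'.2 ≤ dist q.1 q'.1} with hS
  have hG₀ : (fun a => (a, f a)) '' A ∈ S := by
    constructor
    · intro a ha; exact ⟨a, ha, rfl⟩
    · rintro q ⟨a, ha, rfl⟩ q' ⟨b, hb, rfl⟩
      exact hf a ha b hb
  have hchains : ∀ c ⊆ S, IsChain (· ⊆ ·) c → c.Nonempty →
      ∃ ub ∈ S, ∀ s ∈ c, s ⊆ ub := by
    rintro c hcS hchain ⟨G₁, hG₁⟩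
    refine ⟨⋃₀ c, ⟨?_, ?_⟩, fun s hs => Set.subset_sUnion_of_mem hs⟩
    · intro a ha
      exact Set.mem_sUnion.2 ⟨G₁, hG₁, (hcS hG₁).1 a ha⟩
    · rintro q hq q' hq'
      obtain ⟨s, hs, hqs⟩ := Set.mem_sUnion.1 hq
      obtain ⟨s', hs', hqs'⟩ := Set.mem_sUnion.1 hq'
      rcases hchain.total hs hs' with h | h
      · exact (hcS hs').2 q (h hqs) q' hqs'
      · exact (hcS hs).2 q hqs q' (h hqs')
  obtain ⟨M, hM₀, hMmax'⟩ := zorn_subset_nonempty S hchains _ hG₀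
  have hMS : M ∈ S := hMmax'.prop
  have hMmax : ∀ G ∈ S, M ⊆ G → G = M := fun G hG hMG => (hMmax'.eq_of_le hG hMG).symm
  -- the maximal set is the graph of a total function
  have htot : ∀ x : X, ∃ b : E, (x, b) ∈ M := by
    intro x₀
    by_contra hx₀
    push_neg at hx₀
    obtain ⟨c, hc⟩ := hyp M (fun q => q.1.2) (fun q => dist x₀ q.1.1)
      (fun q => dist_nonneg)
      (by
        intro q q'
        calc dist q.1.2 q'.1.2 ≤ dist q.1.1 q'.1.1 := hMS.2 q.1 q.2 q'.1 q'.2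
          _ ≤ dist q.1.1 x₀ + dist x₀ q'.1.1 := dist_triangle _ _ _
          _ = dist x₀ q.1.1 + dist x₀ q'.1.1 := by rw [dist_comm])
    have hins : insert (x₀, c) M ∈ S := by
      constructor
      · intro a ha; exact Set.mem_insert_of_mem _ (hMS.1 a ha)
      · rintro q (rfl | hq) q' (rfl | hq')
        · simp
        · simpa [dist_comm] using hc ⟨q', hq'⟩
        · simpa [dist_comm] using hc ⟨q, hq⟩
        · exact hMS.2 q hq q' hq'
    have := hMmax _ hins (Set.subset_insert _ _)
    exact hx₀ c (this ▸ Set.mem_insert (x₀, c) M)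
  choose F hF using htot
  have huniq : ∀ x b, (x, b) ∈ M → F x = b := by
    intro x b hb
    have h1 := hMS.2 (x, F x) (hF x) (x, b) hb
    simp only [dist_self] at h1
    exact eq_of_dist_eq_zero (le_antisymm h1 dist_nonneg)
  refine ⟨F, fun x y => ?_, fun a ha => ?_⟩
  · exact hMS.2 (x, F x) (hF x) (y, F y) (hF y)
  · exact huniq a (f a) (hMS.1 a ha)

/-- Every nonempty hyperconvex metric space is contractible. -/
theorem contractible_of_hyperconvex {E : Type u} [MetricSpace E] [Nonempty E]
    (hyp : ∀ (I : Type u) (x : I → E) (r : I → ℝ), (∀ i, 0 ≤ r i) →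
      (∀ i j, dist (x i) (x j) ≤ r i + r j) →
      ∃ c : E, ∀ i, dist (x i) c ≤ r i) :
    ContractibleSpace E := by
  classical
  obtain ⟨p⟩ := ‹Nonempty E›
  -- X is E × ℝ with the ℓ¹ metric
  set X : Type u := WithLp 1 (E × ℝ) with hX
  set A : Set X := {q | q.snd = 0 ∨ q.snd = dist q.fst p} with hA
  set f : X → E := fun q => if q.snd = 0 then q.fst else p with hf_def
  have hfval_top : ∀ q : X, q.snd = dist q.fst p → f q = p := by
    intro q hq
    by_cases h0 : q.snd = 0
    · simp only [hf_def, if_pos h0]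
      exact eq_of_dist_eq_zero (h0 ▸ hq.symm)
    · simp [hf_def, h0]
  have hfval_bot : ∀ q : X, q.snd = 0 → f q = q.fst := by
    intro q hq; simp [hf_def, hq]
  have hf : ∀ a ∈ A, ∀ b ∈ A, dist (f a) (f b) ≤ dist a b := by
    intro a ha b hb
    rw [l1_dist_eq]
    rcases ha with ha | ha <;> rcases hb with hb | hb
    · rw [hfval_bot a ha, hfval_bot b hb]
      have h0 : (0:ℝ) ≤ dist a.snd b.snd := dist_nonneg
      linarith
    · rw [hfval_bot a ha, hfval_top b hb]
      have h2 : dist a.snd b.snd = dist b.fst p := by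
        rw [Real.dist_eq, ha, hb, zero_sub, abs_neg, abs_of_nonneg dist_nonneg]
      rw [h2]
      exact dist_triangle a.fst b.fst p
    · rw [hfval_top a ha, hfval_bot b hb]
      have h2 : dist a.snd b.snd = dist a.fst p := by
        rw [Real.dist_eq, ha, hb, sub_zero, abs_of_nonneg dist_nonneg]
      rw [h2]
      calc dist p b.fst ≤ dist p a.fst + dist a.fst b.fst := dist_triangle _ _ _
        _ = dist a.fst b.fst + dist a.fst p := by rw [dist_comm p a.fst]; ring
    · rw [hfval_top a ha, hfval_top b hb]
      have h0 : (0:ℝ) ≤ dist a.fst b.fst := dist_nonneg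
      have h1 : (0:ℝ) ≤ dist a.snd b.snd := dist_nonneg
      simp only [dist_self]
      linarith
  obtain ⟨F, hFlip, hFA⟩ := hyperconvex_extend hyp A f hf
  -- the homotopy
  have hFcont : Continuous F :=
    (LipschitzWith.of_dist_le_mul (K := 1)
      (fun x y => by simpa using hFlip x y)).continuous
  have hψcont : Continuous (fun q : unitInterval × E => (WithLp.toLp 1 (q.2, (q.1 : ℝ) * dist q.2 p) : X)) := by
    exact (WithLp.prod_continuous_toLp 1 E ℝ).comp <| continuous_snd.prodMk
      ((continuous_subtype_val.comp continuous_fst).mul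
        (continuous_snd.dist continuous_const))
  have H : ContinuousMap.Homotopy (ContinuousMap.id E) (ContinuousMap.const E p) :=
    { toFun := fun q => F (WithLp.toLp 1 (q.2, (q.1 : ℝ) * dist q.2 p) : X)
      continuous_toFun := hFcont.comp hψcont
      map_zero_left := by
        intro x
        have hmem : (WithLp.toLp 1 ((x, (0:ℝ)) : E × ℝ) : X) ∈ A := Or.inl rfl
        simp only [Set.Icc.coe_zero, zero_mul]
        rw [hFA _ hmem]
        simp [hf_def]
      map_one_left := by
        intro x
        have hmem : (WithLp.toLp 1 ((x, dist x p) : E × ℝ) : X) ∈ A := Or.inr rfl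
        simp only [Set.Icc.coe_one, one_mul]
        rw [hFA _ hmem]
        exact hfval_top _ rfl }
  rw [contractible_iff_id_nullhomotopic]
  exact ⟨p, ⟨H⟩⟩
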